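/- Define $Q(a,b,\ell) = \frac{\binom{b}{\ell}\binom{s+t-b-1}{a-\ell}}{\binom{s+t-1}{a}}$ for integers $s,t \geq 1$, $0 \leq a \leq s$, $0 \leq b \leq t$, $\ell \geq 0$, with $Q(a,b,-1)=0$. Then for $1 \leq a \leq s$, $1 \leq b \leq t$, and $\ell \geq 0$: $(at+bs-ab) Q(a,b,\ell) = a(t-b)Q(a-1,b,\ell) + (s-a)b\,Q(a,b-1,\ell) + ab\,Q(a-1,b-1,\ell-1)$. -/

import Mathlib

/-- Binomial coefficient of integer arguments, with the convention that it
vanishes when the lower index is negative or exceeds the upper index. -/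
def intChoose (n k : ℤ) : ℚ :=
  if 0 ≤ k ∧ k ≤ n then (n.toNat.choose k.toNat : ℚ) else 0

/-- The intermediate probabilities `Q_{s,t}(a,b,ℓ)` for the forest building
process on the complete bipartite graph `K_{s,t}`.  Note that
`Q s t a b (-1) = 0` automatically since `intChoose b (-1) = 0`. -/
def Q (s t : ℕ) (a b : ℕ) (ℓ : ℤ) : ℚ :=
  intChoose (b : ℤ) ℓ * intChoose ((s : ℤ) + t - b - 1) ((a : ℤ) - ℓ) /
    intChoose ((s : ℤ) + t - 1) (a : ℤ)

lemma intChoose_of_neg {n k : ℤ} (h : k < 0) : intChoose n k = 0 := by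
  simp [intChoose]; intro h'; omega

lemma intChoose_of_lt {n k : ℤ} (h : n < k) : intChoose n k = 0 := by
  simp [intChoose]; intro h'; omega

lemma intChoose_natCast (n k : ℕ) :
    intChoose (n : ℤ) (k : ℤ) = (n.choose k : ℚ) := by
  rcases le_or_gt k n with h | h
  · simp [intChoose, h]
  · rw [intChoose_of_lt (by exact_mod_cast h), Nat.choose_eq_zero_of_lt h,
      Nat.cast_zero]

lemma intChoose_pos {n k : ℤ} (hk : 0 ≤ k) (h : k ≤ n) : 0 < intChoose n k := by
  rw [show intChoose n k = (n.toNat.choose k.toNat : ℚ) by simp [intChoose, hk, h]]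
  exact_mod_cast Nat.choose_pos (by omega)

lemma intChoose_pascal {n : ℤ} (k : ℤ) (hn : 0 ≤ n) :
    intChoose (n + 1) (k + 1) = intChoose n k + intChoose n (k + 1) := by
  obtain ⟨n', rfl⟩ : ∃ n' : ℕ, n = (n' : ℤ) := ⟨n.toNat, (Int.toNat_of_nonneg hn).symm⟩
  rcases lt_trichotomy k (-1) with h | h | h
  · rw [intChoose_of_neg (by omega), intChoose_of_neg (by omega),
      intChoose_of_neg (by omega)]; ring
  · subst h
    rw [intChoose_of_neg (n := (n' : ℤ)) (show (-1:ℤ) < 0 by norm_num),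
      show (-1 + 1 : ℤ) = ((0 : ℕ) : ℤ) by norm_num,
      show ((n' : ℤ) + 1) = ((n' + 1 : ℕ) : ℤ) by push_cast; ring,
      intChoose_natCast, intChoose_natCast]
    simp
  · obtain ⟨k', rfl⟩ : ∃ k' : ℕ, k = (k' : ℤ) :=
      ⟨k.toNat, (Int.toNat_of_nonneg (by omega)).symm⟩
    rw [show ((n' : ℤ) + 1) = ((n' + 1 : ℕ) : ℤ) by push_cast; ring,
      show ((k' : ℤ) + 1) = ((k' + 1 : ℕ) : ℤ) by push_cast; ring,
      intChoose_natCast, intChoose_natCast, intChoose_natCast,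
      Nat.choose_succ_succ, Nat.cast_add]

lemma intChoose_succ_right {n : ℤ} (k : ℤ) (hn : 0 ≤ n) :
    ((k : ℚ) + 1) * intChoose n (k + 1) = ((n : ℚ) - k) * intChoose n k := by
  obtain ⟨n', rfl⟩ : ∃ n' : ℕ, n = (n' : ℤ) := ⟨n.toNat, (Int.toNat_of_nonneg hn).symm⟩
  rcases lt_trichotomy k (-1) with h | h | h
  · rw [intChoose_of_neg (by omega), intChoose_of_neg (by omega)]; ring
  · subst h
    rw [intChoose_of_neg (n := (n' : ℤ)) (show (-1:ℤ) < 0 by norm_num)]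
    norm_num
  · obtain ⟨k', rfl⟩ : ∃ k' : ℕ, k = (k' : ℤ) :=
      ⟨k.toNat, (Int.toNat_of_nonneg (by omega)).symm⟩
    rw [show ((k' : ℤ) + 1) = ((k' + 1 : ℕ) : ℤ) by push_cast; ring,
      intChoose_natCast, intChoose_natCast]
    rcases le_or_gt (k' + 1) n' with h2 | h2
    · have := Nat.choose_succ_right_eq n' k'
      have hc : ((n'.choose (k' + 1) : ℚ)) * (k' + 1) = (n'.choose k') * ((n' : ℚ) - k') := by
        rw [show ((n' : ℚ) - k') = ((n' - k' : ℕ) : ℚ) by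
          push_cast [Nat.cast_sub (show k' ≤ n' by omega)]; ring]
        exact_mod_cast this
      push_cast
      linarith [hc]
    · rw [Nat.choose_eq_zero_of_lt h2]
      rcases eq_or_lt_of_le (show n' ≤ k' by omega) with h3 | h3
      · subst h3; push_cast; ring
      · rw [Nat.choose_eq_zero_of_lt h3]; push_cast; ring

lemma intChoose_succ_mul {n : ℤ} (k : ℤ) (hn : 0 ≤ n) :
    ((n : ℚ) + 1) * intChoose n k = ((k : ℚ) + 1) * intChoose (n + 1) (k + 1) := by
  obtain ⟨n', rfl⟩ : ∃ n' : ℕ, n = (n' : ℤ) := ⟨n.toNat, (Int.toNat_of_nonneg hn).symm⟩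
  rcases lt_trichotomy k (-1) with h | h | h
  · rw [intChoose_of_neg (by omega), intChoose_of_neg (by omega)]; ring
  · subst h
    rw [intChoose_of_neg (n := (n' : ℤ)) (show (-1:ℤ) < 0 by norm_num)]
    norm_num
  · obtain ⟨k', rfl⟩ : ∃ k' : ℕ, k = (k' : ℤ) :=
      ⟨k.toNat, (Int.toNat_of_nonneg (by omega)).symm⟩
    rw [show ((n' : ℤ) + 1) = ((n' + 1 : ℕ) : ℤ) by push_cast; ring,
      show ((k' : ℤ) + 1) = ((k' + 1 : ℕ) : ℤ) by push_cast; ring,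
      intChoose_natCast, intChoose_natCast]
    have := Nat.add_one_mul_choose_eq n' k'
    have hc : ((n' + 1 : ℕ) : ℚ) * (n'.choose k') = ((n' + 1).choose (k' + 1) : ℚ) * (k' + 1) := by
      exact_mod_cast congrArg (Nat.cast : ℕ → ℚ) this
    push_cast at hc ⊢
    linarith [hc]

theorem Q_recurrence (s t a b : ℕ) (ℓ : ℤ) (hs : 1 ≤ s) (ht : 1 ≤ t)
    (ha1 : 1 ≤ a) (ha : a ≤ s) (hb1 : 1 ≤ b) (hb : b ≤ t) (hℓ : 0 ≤ ℓ) :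
    ((a : ℚ) * t + (b : ℚ) * s - (a : ℚ) * b) * Q s t a b ℓ =
      (a : ℚ) * ((t : ℚ) - b) * Q s t (a - 1) b ℓ +
        ((s : ℚ) - a) * (b : ℚ) * Q s t a (b - 1) ℓ +
        (a : ℚ) * (b : ℚ) * Q s t (a - 1) (b - 1) (ℓ - 1) := by
  have hA : ((a - 1 : ℕ) : ℤ) = (a : ℤ) - 1 := by omega
  have hB : ((b - 1 : ℕ) : ℤ) = (b : ℤ) - 1 := by omega
  rcases lt_or_ge (a : ℤ) ℓ with hla | hla
  · have q1 : Q s t a b ℓ = 0 := by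
      unfold Q
      rw [intChoose_of_neg (show (a : ℤ) - ℓ < 0 by omega), mul_zero, zero_div]
    have q2 : Q s t (a - 1) b ℓ = 0 := by
      unfold Q
      rw [intChoose_of_neg (show ((a - 1 : ℕ) : ℤ) - ℓ < 0 by omega), mul_zero, zero_div]
    have q3 : Q s t a (b - 1) ℓ = 0 := by
      unfold Q
      rw [intChoose_of_neg (show (a : ℤ) - ℓ < 0 by omega), mul_zero, zero_div]
    have q4 : Q s t (a - 1) (b - 1) (ℓ - 1) = 0 := by
      unfold Q
      rw [intChoose_of_neg (show ((a - 1 : ℕ) : ℤ) - (ℓ - 1) < 0 by omega), mul_zero,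
        zero_div]
    rw [q1, q2, q3, q4]; ring
  rcases lt_or_ge (b : ℤ) ℓ with hlb | hlb
  · have q1 : Q s t a b ℓ = 0 := by
      unfold Q
      rw [intChoose_of_lt (show (b : ℤ) < ℓ by omega), zero_mul, zero_div]
    have q2 : Q s t (a - 1) b ℓ = 0 := by
      unfold Q
      rw [intChoose_of_lt (show (b : ℤ) < ℓ by omega), zero_mul, zero_div]
    have q3 : Q s t a (b - 1) ℓ = 0 := by
      unfold Q
      rw [intChoose_of_lt (show ((b - 1 : ℕ) : ℤ) < ℓ by omega), zero_mul, zero_div]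
    have q4 : Q s t (a - 1) (b - 1) (ℓ - 1) = 0 := by
      unfold Q
      rw [intChoose_of_lt (show ((b - 1 : ℕ) : ℤ) < ℓ - 1 by omega), zero_mul, zero_div]
    rw [q1, q2, q3, q4]; ring
  -- main case : 0 ≤ ℓ ≤ a, ℓ ≤ b
  set x1 := intChoose (b : ℤ) ℓ with hx1
  set x2 := intChoose ((b : ℤ) - 1) ℓ with hx2
  set x3 := intChoose ((b : ℤ) - 1) (ℓ - 1) with hx3
  set y1 := intChoose ((s : ℤ) + t - b - 1) ((a : ℤ) - ℓ) with hy1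
  set y2 := intChoose ((s : ℤ) + t - b - 1) ((a : ℤ) - 1 - ℓ) with hy2
  set y3 := intChoose ((s : ℤ) + t - b) ((a : ℤ) - ℓ) with hy3
  set z1 := intChoose ((s : ℤ) + t - 1) (a : ℤ) with hz1
  set z2 := intChoose ((s : ℤ) + t - 1) ((a : ℤ) - 1) with hz2
  have hz1pos : z1 ≠ 0 := ne_of_gt (intChoose_pos (by omega) (by omega))
  have hz2pos : z2 ≠ 0 := ne_of_gt (intChoose_pos (by omega) (by omega))
  have e1 : x1 = x3 + x2 := by
    have h := intChoose_pascal (n := (b : ℤ) - 1) (ℓ - 1) (by omega)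
    rw [show ((b : ℤ) - 1) + 1 = (b : ℤ) by ring, show (ℓ - 1) + 1 = ℓ by ring] at h
    exact h
  have e2 : (b : ℚ) * x3 = ((ℓ : ℤ) : ℚ) * x1 := by
    have h := intChoose_succ_mul (n := (b : ℤ) - 1) (ℓ - 1) (by omega)
    rw [show ((b : ℤ) - 1) + 1 = (b : ℤ) by ring, show (ℓ - 1) + 1 = ℓ by ring] at h
    push_cast at h
    linarith [h]
  have e3 : y3 = y2 + y1 := by
    have h := intChoose_pascal (n := (s : ℤ) + t - b - 1) ((a : ℤ) - ℓ - 1) (by omega)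
    rw [show ((s : ℤ) + t - b - 1) + 1 = (s : ℤ) + t - b by ring,
      show ((a : ℤ) - ℓ - 1) + 1 = (a : ℤ) - ℓ by ring,
      show ((a : ℤ) - ℓ - 1) = (a : ℤ) - 1 - ℓ by ring] at h
    exact h
  have e4 : (a : ℚ) * z1 = ((s : ℚ) + t - a) * z2 := by
    have h := intChoose_succ_right (n := (s : ℤ) + t - 1) ((a : ℤ) - 1) (by omega)
    rw [show ((a : ℤ) - 1) + 1 = (a : ℤ) by ring] at h
    push_cast at h
    linarith [h]
  have e5 : ((a : ℚ) - ((ℓ : ℤ) : ℚ)) * y1 = ((s : ℚ) + t - b - a + ((ℓ : ℤ) : ℚ)) * y2 := by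
    have h := intChoose_succ_right (n := (s : ℤ) + t - b - 1) ((a : ℤ) - ℓ - 1) (by omega)
    rw [show ((a : ℤ) - ℓ - 1) + 1 = (a : ℤ) - ℓ by ring,
      show ((a : ℤ) - ℓ - 1) = (a : ℤ) - 1 - ℓ by ring] at h
    push_cast at h
    linarith [h]
  have hQ1 : Q s t a b ℓ = x1 * y1 / z1 := rfl
  have hQ2 : Q s t (a - 1) b ℓ = x1 * y2 / z2 := by
    unfold Q
    rw [hA, show (a : ℤ) - 1 - ℓ = (a : ℤ) - 1 - ℓ from rfl]
  have hQ3 : Q s t a (b - 1) ℓ = x2 * y3 / z1 := by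
    unfold Q
    rw [hB, show (s : ℤ) + t - ((b : ℤ) - 1) - 1 = (s : ℤ) + t - b by ring]
  have hQ4 : Q s t (a - 1) (b - 1) (ℓ - 1) = x3 * y3 / z2 := by
    unfold Q
    rw [hA, hB, show (s : ℤ) + t - ((b : ℤ) - 1) - 1 = (s : ℤ) + t - b by ring,
      show (a : ℤ) - 1 - (ℓ - 1) = (a : ℤ) - ℓ by ring]
  rw [hQ1, hQ2, hQ3, hQ4]
  have key : ((a : ℚ) * t + (b : ℚ) * s - (a : ℚ) * b) * (x1 * y1 * z2) =
      (a : ℚ) * ((t : ℚ) - b) * (x1 * y2 * z1) +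
        ((s : ℚ) - a) * (b : ℚ) * (x2 * y3 * z2) +
        (a : ℚ) * (b : ℚ) * (x3 * y3 * z1) := by
    linear_combination (-( (t : ℚ) - b) * x1 * y2 - ((ℓ : ℤ) : ℚ) * x1 * y3) * e4 +
      (-(a : ℚ) * y3 * z1 + ((s : ℚ) - a) * y3 * z2) * e2 +
      (((s : ℚ) - a) * b * y3 * z2) * e1 +
      (-(((ℓ : ℤ) : ℚ) * ((s : ℚ) + t - a) + ((s : ℚ) - a) * ((b : ℚ) - ((ℓ : ℤ) : ℚ)))
        * x1 * z2) * e3 +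
      ((t : ℚ) * x1 * z2) * e5
  field_simp
  linear_combination key
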